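/- Let p ∈ [0,1) and s ∈ [0,1] be real numbers, q, m natural numbers with m ≥ 1, and set f = 1 − (s + (1−s)·(1−p)^q)^m and A = p·q·(1−s)·m. If A + f ≤ 1, then the probability of a uniquely successful round dominates f·(1−f): ∑_{k=1}^{m} p·q·k·(1−p)^{q·(k−1)} · (m choose k) · (1−s)^k · s^{m−k} ≥ f·(1−f). -/

import Mathlib

/-- The probability of a uniquely successful round dominates `E[X_i](1 - E[X_i])`,
assuming `p·q·E[n_alert] + E[X_i] ≤ 1`. -/
theorem unique_successful_round_lower_bound
    (p s : ℝ) (hp : p ∈ Set.Ico (0:ℝ) 1) (hs : s ∈ Set.Icc (0:ℝ) 1)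
    (q m : ℕ) (hm : 1 ≤ m) (f A : ℝ)
    (hf : f = 1 - (s + (1 - s) * (1 - p) ^ q) ^ m)
    (hA : A = p * q * (1 - s) * m) (hAf : A + f ≤ 1) :
    ∑ k ∈ Finset.Icc 1 m,
        p * q * k * (1 - p) ^ (q * (k - 1)) * (m.choose k : ℝ) * (1 - s) ^ k * s ^ (m - k)
      ≥ f * (1 - f) := by
  obtain ⟨hp0, hp1⟩ := hp
  obtain ⟨hs0, hs1⟩ := hs
  have hβ0 : (0:ℝ) ≤ (1 - p) ^ q := pow_nonneg (by linarith) q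
  have hβ1 : (1 - p) ^ q ≤ 1 := pow_le_one₀ (by linarith) (by linarith)
  set β : ℝ := (1 - p) ^ q with hβ
  set α : ℝ := 1 - β with hα
  have hα0 : 0 ≤ α := by simp [hα]; linarith
  have hα1 : α ≤ 1 := by simp [hα]; linarith
  set b : ℝ := s + (1 - s) * β with hb
  have hb0 : 0 ≤ b := by have : 0 ≤ (1 - s) * β := mul_nonneg (by linarith) hβ0; linarith
  have hb1 : b ≤ 1 := by nlinarith
  -- Bernoulli: α ≤ p * q
  have hpq : α ≤ p * q := by
    have h := one_add_mul_le_pow (a := -p) (by linarith) q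
    simp only [hα, hβ]
    have : (1 + -p) ^ q = (1 - p) ^ q := by ring_nf
    rw [this] at h
    nlinarith
  -- Step 1: termwise lower bound of the sum
  have step1 : ∑ k ∈ Finset.Icc 1 m,
      α * k * β ^ (k - 1) * (m.choose k : ℝ) * (1 - s) ^ k * s ^ (m - k)
      ≤ ∑ k ∈ Finset.Icc 1 m,
      p * q * k * (1 - p) ^ (q * (k - 1)) * (m.choose k : ℝ) * (1 - s) ^ k * s ^ (m - k) := by
    apply Finset.sum_le_sum
    intro k hk
    have hrw : (1 - p) ^ (q * (k - 1)) = β ^ (k - 1) := by rw [pow_mul]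
    rw [hrw]
    have hX : 0 ≤ (k : ℝ) * (β ^ (k - 1) * ((m.choose k : ℝ) * ((1 - s) ^ k * s ^ (m - k)))) := by
      have := pow_nonneg hβ0 (k - 1)
      have h2 : (0:ℝ) ≤ (1 - s) ^ k := pow_nonneg (by linarith) k
      have h3 : (0:ℝ) ≤ s ^ (m - k) := pow_nonneg hs0 (m - k)
      positivity
    calc α * k * β ^ (k - 1) * (m.choose k : ℝ) * (1 - s) ^ k * s ^ (m - k)
        = α * ((k : ℝ) * (β ^ (k - 1) * ((m.choose k : ℝ) * ((1 - s) ^ k * s ^ (m - k))))) := by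
          ring
      _ ≤ (p * q) * ((k : ℝ) * (β ^ (k - 1) * ((m.choose k : ℝ) * ((1 - s) ^ k * s ^ (m - k))))) :=
          mul_le_mul_of_nonneg_right hpq hX
      _ = p * q * k * β ^ (k - 1) * (m.choose k : ℝ) * (1 - s) ^ k * s ^ (m - k) := by ring
  -- Step 2: closed form of the lower sum
  have step2 : ∑ k ∈ Finset.Icc 1 m,
      α * k * β ^ (k - 1) * (m.choose k : ℝ) * (1 - s) ^ k * s ^ (m - k)
      = (m : ℝ) * α * (1 - s) * b ^ (m - 1) := by
    have hIcc : Finset.Icc 1 m = Finset.Ico 1 (m + 1) := by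
      rw [Finset.Ico_add_one_right_eq_Icc]
    rw [hIcc, Finset.sum_Ico_eq_sum_range]
    simp only [Nat.add_sub_cancel]
    have hterm : ∀ i ∈ Finset.range m,
        α * (↑(1 + i)) * β ^ (1 + i - 1) * (m.choose (1 + i) : ℝ) * (1 - s) ^ (1 + i)
          * s ^ (m - (1 + i))
        = (m : ℝ) * α * (1 - s) *
          (((1 - s) * β) ^ i * s ^ (m - 1 - i) * ((m - 1).choose i : ℝ)) := by
      intro i hi
      have him : i < m := Finset.mem_range.mp hi
      have hchooseN : m * (m - 1).choose i = m.choose (1 + i) * (1 + i) := by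
        have hm1 : m - 1 + 1 = m := by omega
        have h := Nat.add_one_mul_choose_eq (m - 1) i
        rw [hm1] at h
        rw [Nat.add_comm 1 i]
        exact h
      have hc : (m : ℝ) * ((m - 1).choose i : ℝ)
          = (m.choose (1 + i) : ℝ) * (1 + (i : ℝ)) := by exact_mod_cast hchooseN
      have hsub : m - (1 + i) = m - 1 - i := by omega
      have hpow : (1 : ℕ) + i - 1 = i := by omega
      rw [hsub, hpow, mul_pow]
      push_cast
      linear_combination (-(α * β ^ i * (1 - s) ^ (1 + i) * s ^ (m - 1 - i))) * hc
    rw [Finset.sum_congr rfl hterm, ← Finset.mul_sum]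
    congr 1
    have hm1 : m = (m - 1) + 1 := (Nat.succ_pred_eq_of_pos (by omega)).symm
    rw [hb, add_comm s ((1-s)*β)]
    rw [add_pow ((1-s)*β) s (m-1)]
    rw [show Finset.range m = Finset.range ((m-1)+1) from by rw [← hm1]]
  -- Step 3: final inequality
  have hbm : b = 1 - (1 - s) * α := by simp [hb, hα]; ring
  have hfb : f = 1 - b ^ m := by rw [hf, hb]
  have hbern : 1 - (m : ℝ) * ((1 - s) * α) ≤ b ^ m := by
    have h := one_add_mul_le_pow (a := -((1 - s) * α)) (by nlinarith) m
    have : (1 + -((1 - s) * α)) ^ m = b ^ m := by rw [hbm]; ring_nf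
    rw [this] at h
    linarith
  have hf0 : 0 ≤ f := by
    rw [hfb]
    have : b ^ m ≤ 1 := pow_le_one₀ hb0 hb1
    linarith
  have hfM : f ≤ (m : ℝ) * ((1 - s) * α) := by rw [hfb]; linarith
  have hbmm : b ^ m ≤ b ^ (m - 1) := pow_le_pow_of_le_one hb0 hb1 (by omega)
  have hfinal : f * (1 - f) ≤ (m : ℝ) * α * (1 - s) * b ^ (m - 1) := by
    have h1f : 1 - f = b ^ m := by rw [hfb]; ring
    rw [h1f]
    calc f * b ^ m ≤ ((m : ℝ) * ((1 - s) * α)) * b ^ (m - 1) :=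
          mul_le_mul hfM hbmm (pow_nonneg hb0 m)
            (mul_nonneg (Nat.cast_nonneg m) (mul_nonneg (by linarith) hα0))
      _ = (m : ℝ) * α * (1 - s) * b ^ (m - 1) := by ring
  calc f * (1 - f) ≤ (m : ℝ) * α * (1 - s) * b ^ (m - 1) := hfinal
    _ = ∑ k ∈ Finset.Icc 1 m,
        α * k * β ^ (k - 1) * (m.choose k : ℝ) * (1 - s) ^ k * s ^ (m - k) := step2.symm
    _ ≤ _ := step1
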